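/- Let G be a finite simple graph with m edges. Then f_3(G) ≥ (2/3)·m + (1/3)·h(m); that is, G admits a 3-partition (V_1, V_2, V_3) with e(V_1, V_2, V_3) ≥ (2/3)·m + (1/3)·h(m). -/

import Mathlib

open Finset

noncomputable def hfun (x : ℝ) : ℝ := Real.sqrt (2 * x + 1 / 4) - 1 / 2

variable {V : Type*} [Fintype V] [DecidableEq V]

/-- Number of edges of `G` with both endpoints in `S`. -/
def eIn (G : SimpleGraph V) [DecidableRel G.Adj] (S : Finset V) : ℕ :=
  (Finset.univ.filter (fun p : V × V => G.Adj p.1 p.2 ∧ p.1 ∈ S ∧ p.2 ∈ S)).card / 2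

/-- Number of edges of `G` with one endpoint in `S` and the other in `T` (for disjoint `S`, `T`). -/
def eCross (G : SimpleGraph V) [DecidableRel G.Adj] (S T : Finset V) : ℕ :=
  (Finset.univ.filter (fun p : V × V => G.Adj p.1 p.2 ∧ p.1 ∈ S ∧ p.2 ∈ T)).card

/-- `P` is a partition of the vertex set into `k` pairwise disjoint (possibly empty) parts. -/
def IsKPartition {k : ℕ} (P : Fin k → Finset V) : Prop :=
  (∀ i j : Fin k, i ≠ j → Disjoint (P i) (P j)) ∧ ∀ v : V, ∃ i, v ∈ P i

/-- The number of crossing edges of a `k`-partition. -/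
def crossTotal (G : SimpleGraph V) [DecidableRel G.Adj] {k : ℕ} (P : Fin k → Finset V) : ℕ :=
  ∑ i : Fin k, ∑ j : Fin k, if i < j then eCross G (P i) (P j) else 0

/-- `f_k(G)`: the maximum number of crossing edges over all `k`-partitions of `G`. -/
noncomputable def maxCut (G : SimpleGraph V) [DecidableRel G.Adj] (k : ℕ) : ℕ :=
  sSup {n : ℕ | ∃ P : Fin k → Finset V, IsKPartition P ∧ crossTotal G P = n}

namespace BS

variable {V : Type*} [Fintype V] [DecidableEq V]

set_option linter.unusedSectionVars false
set_option maxHeartbeats 1000000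

/-- doubled cut count (ordered pairs) -/
def cutP (G : SimpleGraph V) [DecidableRel G.Adj] (f : V → Fin 3) : ℕ :=
  (Finset.univ.filter (fun p : V × V => G.Adj p.1 p.2 ∧ f p.1 ≠ f p.2)).card

/-- number of neighbors of `v` in a different class -/
def cdeg (G : SimpleGraph V) [DecidableRel G.Adj] (f : V → Fin 3) (v : V) : ℕ :=
  ((G.neighborFinset v).filter (fun w => f w ≠ f v)).card

lemma cutP_eq_sum (G : SimpleGraph V) [DecidableRel G.Adj] (f : V → Fin 3) :
    cutP G f = ∑ v, cdeg G f v := by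
  classical
  unfold cutP cdeg
  rw [Finset.card_eq_sum_card_fiberwise (f := Prod.fst) (t := Finset.univ)
    (fun x _ => Finset.mem_univ _)]
  refine Finset.sum_congr rfl fun v _ => ?_
  refine Finset.card_bij (fun p _ => p.2) ?_ ?_ ?_
  · rintro ⟨p1, p2⟩ hp
    simp only [Finset.mem_filter, Finset.mem_univ, true_and] at hp
    obtain ⟨⟨hadj, hne⟩, h1⟩ := hp
    subst h1
    simp only [Finset.mem_filter, SimpleGraph.mem_neighborFinset]
    exact ⟨hadj, fun h => hne h.symm⟩
  · rintro ⟨p1, p2⟩ hp ⟨q1, q2⟩ hq h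
    simp only [Finset.mem_filter, Finset.mem_univ, true_and] at hp hq
    obtain ⟨-, h1⟩ := hp; obtain ⟨-, h2⟩ := hq
    simp only at h h1 h2
    subst h1; subst h2; subst h
    rfl
  · intro w hw
    simp only [Finset.mem_filter, SimpleGraph.mem_neighborFinset] at hw
    refine ⟨(v, w), ?_, rfl⟩
    exact Finset.mem_filter.mpr ⟨Finset.mem_filter.mpr ⟨Finset.mem_univ _, hw.1,
      fun h => hw.2 h.symm⟩, rfl⟩

/-- delete all edges at `v` -/
def Gdel (G : SimpleGraph V) (v : V) : SimpleGraph V where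
  Adj x y := G.Adj x y ∧ x ≠ v ∧ y ≠ v
  symm := ⟨fun _ _ ⟨h, hx, hy⟩ => ⟨h.symm, hy, hx⟩⟩
  loopless := ⟨fun x h => G.loopless.irrefl x h.1⟩

instance instGdelDec (G : SimpleGraph V) [DecidableRel G.Adj] (v : V) :
    DecidableRel (Gdel G v).Adj := fun x y =>
  inferInstanceAs (Decidable (G.Adj x y ∧ x ≠ v ∧ y ≠ v))

lemma Gdel_adj (G : SimpleGraph V) (v x y : V) :
    (Gdel G v).Adj x y ↔ G.Adj x y ∧ x ≠ v ∧ y ≠ v := Iff.rfl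

lemma Gdel_nbr (G : SimpleGraph V) [DecidableRel G.Adj] (v w : V) (hw : w ≠ v) :
    (Gdel G v).neighborFinset w = (G.neighborFinset w).erase v := by
  ext x
  simp only [SimpleGraph.mem_neighborFinset, Finset.mem_erase, Gdel_adj]
  constructor
  · rintro ⟨h, -, hx⟩; exact ⟨hx, h⟩
  · rintro ⟨hx, h⟩; exact ⟨h, hw, hx⟩

lemma Gdel_nbr_self (G : SimpleGraph V) [DecidableRel G.Adj] (v : V) :
    (Gdel G v).neighborFinset v = ∅ := by
  ext x
  simp only [SimpleGraph.mem_neighborFinset, Finset.notMem_empty, iff_false, Gdel_adj]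
  rintro ⟨-, h, -⟩; exact h rfl

lemma Gdel_deg_self (G : SimpleGraph V) [DecidableRel G.Adj] (v : V) :
    (Gdel G v).degree v = 0 := by
  rw [← SimpleGraph.card_neighborFinset_eq_degree, Gdel_nbr_self, Finset.card_empty]

lemma Gdel_deg (G : SimpleGraph V) [DecidableRel G.Adj] (v w : V) (hw : w ≠ v) :
    (Gdel G v).degree w + (if G.Adj v w then 1 else 0) = G.degree w := by
  rw [← SimpleGraph.card_neighborFinset_eq_degree, ← SimpleGraph.card_neighborFinset_eq_degree,
    Gdel_nbr G v w hw]
  by_cases h : G.Adj v w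
  · have hv : v ∈ G.neighborFinset w := by
      rw [SimpleGraph.mem_neighborFinset]; exact h.symm
    rw [if_pos h, Finset.card_erase_add_one hv]
  · have hv : v ∉ G.neighborFinset w := by
      rw [SimpleGraph.mem_neighborFinset]; exact fun hh => h hh.symm
    rw [if_neg h, Finset.erase_eq_of_notMem hv, add_zero]

lemma sum_ite_adj (G : SimpleGraph V) [DecidableRel G.Adj] (v : V) :
    (∑ w, if G.Adj v w then 1 else 0) = G.degree v := by
  have h := Finset.sum_boole (R := ℕ) (fun w => G.Adj v w) Finset.univ
  rw [Nat.cast_id] at h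
  rw [h, ← SimpleGraph.card_neighborFinset_eq_degree, SimpleGraph.neighborFinset_eq_filter]

lemma Gdel_sum_deg (G : SimpleGraph V) [DecidableRel G.Adj] (v : V) :
    (∑ w, (Gdel G v).degree w) + 2 * G.degree v = ∑ w, G.degree w := by
  have h1 : ∀ w ∈ Finset.univ.erase v,
      (Gdel G v).degree w + (if G.Adj v w then 1 else 0) = G.degree w :=
    fun w hw => Gdel_deg G v w (Finset.ne_of_mem_erase hw)
  have h2 : ∑ w ∈ Finset.univ.erase v, ((Gdel G v).degree w + (if G.Adj v w then 1 else 0))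
      = ∑ w ∈ Finset.univ.erase v, G.degree w := Finset.sum_congr rfl h1
  rw [Finset.sum_add_distrib] at h2
  have h3 : ∑ w ∈ Finset.univ.erase v, (if G.Adj v w then 1 else 0) = G.degree v := by
    rw [← sum_ite_adj G v]
    rw [← Finset.add_sum_erase _ _ (Finset.mem_univ v)]
    simp [G.loopless.irrefl v]
  have h4 : ∑ w ∈ Finset.univ.erase v, (Gdel G v).degree w = ∑ w, (Gdel G v).degree w := by
    rw [← Finset.add_sum_erase _ _ (Finset.mem_univ v), Gdel_deg_self, zero_add]
  have h5 : ∑ w ∈ Finset.univ.erase v, G.degree w + G.degree v = ∑ w, G.degree w := by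
    rw [← Finset.add_sum_erase _ _ (Finset.mem_univ v)]; ring
  omega

lemma Gdel_edge (G : SimpleGraph V) [DecidableRel G.Adj] (v : V) :
    (Gdel G v).edgeFinset.card + G.degree v = G.edgeFinset.card := by
  have h1 := SimpleGraph.sum_degrees_eq_twice_card_edges (Gdel G v)
  have h2 := SimpleGraph.sum_degrees_eq_twice_card_edges G
  have h3 := Gdel_sum_deg G v
  omega

lemma cdeg_Gdel (G : SimpleGraph V) [DecidableRel G.Adj] (v : V) (f : V → Fin 3) (w : V)
    (hw : w ≠ v) :
    cdeg (Gdel G v) f w + (if G.Adj w v ∧ f v ≠ f w then 1 else 0) = cdeg G f w := by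
  unfold cdeg
  rw [Gdel_nbr G v w hw]
  by_cases h : G.Adj w v ∧ f v ≠ f w
  · have hv : v ∈ (G.neighborFinset w).filter (fun x => f x ≠ f w) := by
      simp only [Finset.mem_filter, SimpleGraph.mem_neighborFinset]
      exact ⟨h.1, h.2⟩
    rw [if_pos h, ← Finset.card_erase_add_one hv]
    congr 2
    ext x
    simp only [Finset.mem_filter, Finset.mem_erase]
    tauto
  · have hv : v ∉ (G.neighborFinset w).filter (fun x => f x ≠ f w) := by
      simp only [Finset.mem_filter, SimpleGraph.mem_neighborFinset]
      tauto
    rw [if_neg h, add_zero]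
    congr 1
    ext x
    simp only [Finset.mem_filter, Finset.mem_erase]
    constructor
    · rintro ⟨⟨hx, hmem⟩, hne⟩; exact ⟨hmem, hne⟩
    · rintro ⟨hmem, hne⟩
      refine ⟨⟨?_, hmem⟩, hne⟩
      rintro rfl
      exact hv (Finset.mem_filter.mpr ⟨hmem, hne⟩)

lemma cdeg_Gdel_self (G : SimpleGraph V) [DecidableRel G.Adj] (v : V) (f : V → Fin 3) :
    cdeg (Gdel G v) f v = 0 := by
  unfold cdeg
  rw [Gdel_nbr_self]
  simp

lemma cutP_del (G : SimpleGraph V) [DecidableRel G.Adj] (v : V) (f : V → Fin 3) :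
    cutP G f = cutP (Gdel G v) f + 2 * cdeg G f v := by
  rw [cutP_eq_sum, cutP_eq_sum]
  have key : ∀ w ∈ Finset.univ.erase v,
      cdeg (Gdel G v) f w + (if G.Adj w v ∧ f v ≠ f w then 1 else 0) = cdeg G f w :=
    fun w hw => cdeg_Gdel G v f w (Finset.ne_of_mem_erase hw)
  have h2 : (∑ w ∈ Finset.univ.erase v, cdeg (Gdel G v) f w)
      + (∑ w ∈ Finset.univ.erase v, (if G.Adj w v ∧ f v ≠ f w then 1 else 0))
      = ∑ w ∈ Finset.univ.erase v, cdeg G f w := by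
    rw [← Finset.sum_add_distrib]
    exact Finset.sum_congr rfl key
  have hA : (∑ w ∈ Finset.univ.erase v, (if G.Adj w v ∧ f v ≠ f w then 1 else 0))
      = cdeg G f v := by
    have e1 : (∑ w, (if G.Adj w v ∧ f v ≠ f w then 1 else 0))
        = (∑ w ∈ Finset.univ.erase v, (if G.Adj w v ∧ f v ≠ f w then 1 else 0)) := by
      rw [← Finset.add_sum_erase _ _ (Finset.mem_univ v)]
      simp [G.loopless.irrefl v]
    have e2 := Finset.sum_boole (R := ℕ) (fun w => G.Adj w v ∧ f v ≠ f w) Finset.univ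
    rw [Nat.cast_id] at e2
    rw [← e1, e2]
    unfold cdeg
    apply Finset.card_bij (fun a _ => a)
    · intro a ha
      simp only [Finset.mem_filter, Finset.mem_univ, true_and] at ha
      simp only [Finset.mem_filter, SimpleGraph.mem_neighborFinset]
      exact ⟨ha.1.symm, fun hh => ha.2 hh.symm⟩
    · intro a _ b _ h; exact h
    · intro b hb
      simp only [Finset.mem_filter, SimpleGraph.mem_neighborFinset] at hb
      exact ⟨b, Finset.mem_filter.mpr ⟨Finset.mem_univ _, hb.1.symm, fun hh => hb.2 hh.symm⟩, rfl⟩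
  have h4 : ∑ w ∈ Finset.univ.erase v, cdeg (Gdel G v) f w = ∑ w, cdeg (Gdel G v) f w := by
    rw [← Finset.add_sum_erase _ _ (Finset.mem_univ v), cdeg_Gdel_self, zero_add]
  have h5 : cdeg G f v + ∑ w ∈ Finset.univ.erase v, cdeg G f w = ∑ w, cdeg G f w := by
    rw [← Finset.add_sum_erase _ _ (Finset.mem_univ v)]
  omega

lemma cutP_Gdel_update (G : SimpleGraph V) [DecidableRel G.Adj] (v : V) (f : V → Fin 3)
    (j : Fin 3) :
    cutP (Gdel G v) (Function.update f v j) = cutP (Gdel G v) f := by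
  unfold cutP
  congr 1
  apply Finset.filter_congr
  rintro ⟨a, b⟩ -
  by_cases h : (Gdel G v).Adj a b
  · obtain ⟨-, ha, hb⟩ := h
    simp only [Function.update_of_ne ha, Function.update_of_ne hb]
  · simp only [h, false_and]

lemma cdeg_update (G : SimpleGraph V) [DecidableRel G.Adj] (v : V) (f : V → Fin 3) (j : Fin 3) :
    cdeg G (Function.update f v j) v
      = ((G.neighborFinset v).filter (fun w => f w ≠ j)).card := by
  unfold cdeg
  congr 1
  apply Finset.filter_congr
  intro w hw
  rw [SimpleGraph.mem_neighborFinset] at hw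
  rw [Function.update_of_ne hw.ne', Function.update_self]

lemma pigeon (G : SimpleGraph V) [DecidableRel G.Adj] (v : V) (f : V → Fin 3) :
    ∃ j : Fin 3, 3 * ((G.neighborFinset v).filter (fun w => f w = j)).card ≤ G.degree v := by
  have hsum : ∑ j : Fin 3, ((G.neighborFinset v).filter (fun w => f w = j)).card
      = G.degree v := by
    rw [← SimpleGraph.card_neighborFinset_eq_degree]
    exact (Finset.card_eq_sum_card_fiberwise (f := f) (t := Finset.univ)
      (fun x _ => Finset.mem_univ _)).symm
  rw [Fin.sum_univ_three] at hsum
  rcases Nat.lt_or_ge (3 * ((G.neighborFinset v).filter (fun w => f w = (0:Fin 3))).card)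
    (G.degree v + 1) with h | h
  · exact ⟨0, by omega⟩
  rcases Nat.lt_or_ge (3 * ((G.neighborFinset v).filter (fun w => f w = (1:Fin 3))).card)
    (G.degree v + 1) with h1 | h1
  · exact ⟨1, by omega⟩
  exact ⟨2, by omega⟩

/-- Greedy extension: place `v` into a best class. -/
lemma extend (G : SimpleGraph V) [DecidableRel G.Adj] (v : V) (f₀ : V → Fin 3) :
    ∃ f : V → Fin 3,
      3 * cutP (Gdel G v) f₀ + 4 * G.degree v + 2 * (G.degree v % 3) ≤ 3 * cutP G f := by
  obtain ⟨j, hj⟩ := pigeon G v f₀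
  refine ⟨Function.update f₀ v j, ?_⟩
  have hsplit := cutP_del G v (Function.update f₀ v j)
  rw [cutP_Gdel_update] at hsplit
  have hcd := cdeg_update G v f₀ j
  have hpart : ((G.neighborFinset v).filter (fun w => f₀ w ≠ j)).card
      + ((G.neighborFinset v).filter (fun w => f₀ w = j)).card = G.degree v := by
    rw [← SimpleGraph.card_neighborFinset_eq_degree]
    have h := Finset.card_filter_add_card_filter_not (s := G.neighborFinset v)
      (p := fun w => f₀ w = j)
    have h2 : (Finset.filter (fun a => ¬ f₀ a = j) (G.neighborFinset v))
        = (Finset.filter (fun w => f₀ w ≠ j) (G.neighborFinset v)) := rfl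
    rw [h2] at h
    omega
  omega

lemma exists_pos_degree (G : SimpleGraph V) [DecidableRel G.Adj]
    (hm : 1 ≤ G.edgeFinset.card) : ∃ v, 1 ≤ G.degree v := by
  by_contra h
  push_neg at h
  have h0 : ∀ v, G.degree v = 0 := fun v => by have := h v; omega
  have := SimpleGraph.sum_degrees_eq_twice_card_edges G
  rw [Finset.sum_congr rfl (fun v _ => h0 v), Finset.sum_const_zero] at this
  omega

/-- The sweep lemma: an independent set all of whose degrees are `≢ 1 (mod 3)` and positive
forces doubled surplus at least `4|L|`. -/
lemma sweep : ∀ m : ℕ, ∀ (G : SimpleGraph V) (_ : DecidableRel G.Adj),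
    G.edgeFinset.card = m →
    ∀ L : Finset V, (∀ u ∈ L, ∀ w ∈ L, ¬ G.Adj u w) →
    (∀ u ∈ L, 1 ≤ G.degree u ∧ G.degree u % 3 ≠ 1) →
    ∃ f : V → Fin 3, 4 * m + 4 * L.card ≤ 3 * cutP G f := by
  intro m
  induction m using Nat.strong_induction_on with
  | _ m IH =>
  intro G instG hm L hind hdeg
  rcases Nat.eq_zero_or_pos m with hm0 | hmpos
  · -- no edges: L empty
    have hL : L = ∅ := by
      rcases Finset.eq_empty_or_nonempty L with h | ⟨u, hu⟩
      · exact h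
      · exfalso
        obtain ⟨h1, -⟩ := hdeg u hu
        have h2 := SimpleGraph.sum_degrees_eq_twice_card_edges G
        rw [hm, hm0] at h2
        have h3 : G.degree u ≤ ∑ w, G.degree w := Finset.single_le_sum
          (f := fun w => G.degree w) (fun w _ => Nat.zero_le _) (Finset.mem_univ u)
        omega
    refine ⟨fun _ => 0, ?_⟩
    subst hL hm0
    simp
  · -- m ≥ 1
    by_cases h2 : ∃ u ∈ L, G.degree u % 3 = 2
    · obtain ⟨u, huL, hu2⟩ := h2
      have hu1 : 1 ≤ G.degree u := (hdeg u huL).1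
      have hedge := Gdel_edge G u
      have hm'lt : (Gdel G u).edgeFinset.card < m := by omega
      have hL' : ∀ w ∈ L.erase u, ∀ x ∈ L.erase u, ¬ (Gdel G u).Adj w x := by
        intro w hw x hx hadj
        exact hind w (Finset.mem_of_mem_erase hw) x (Finset.mem_of_mem_erase hx) hadj.1
      have hdeg' : ∀ w ∈ L.erase u, 1 ≤ (Gdel G u).degree w ∧ (Gdel G u).degree w % 3 ≠ 1 := by
        intro w hw
        have hwu : w ≠ u := Finset.ne_of_mem_erase hw
        have hnadj : ¬ G.Adj u w := hind u huL w (Finset.mem_of_mem_erase hw)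
        have hh := Gdel_deg G u w hwu
        rw [if_neg hnadj, add_zero] at hh
        have := hdeg w (Finset.mem_of_mem_erase hw)
        constructor <;> omega
      obtain ⟨f₀, hf₀⟩ := IH _ hm'lt (Gdel G u) inferInstance rfl (L.erase u) hL' hdeg'
      obtain ⟨f, hf⟩ := extend G u f₀
      refine ⟨f, ?_⟩
      have hcard := Finset.card_erase_of_mem huL
      have hLpos : 1 ≤ L.card := Finset.card_pos.mpr ⟨u, huL⟩
      omega
    · -- all degrees in L are ≡ 0 mod 3
      push_neg at h2
      rcases Finset.eq_empty_or_nonempty L with hLe | ⟨u₀, hu₀⟩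
      · -- L empty : greedy
        obtain ⟨v, hv⟩ := exists_pos_degree G (by omega)
        have hedge := Gdel_edge G v
        have hm'lt : (Gdel G v).edgeFinset.card < m := by omega
        obtain ⟨f₀, hf₀⟩ := IH _ hm'lt (Gdel G v) inferInstance rfl ∅ (by simp) (by simp)
        obtain ⟨f, hf⟩ := extend G v f₀
        refine ⟨f, ?_⟩
        subst hLe
        simp only [Finset.card_empty] at *
        omega
      · -- pick a neighbor of u₀ and delete it
        have hd0 : G.degree u₀ % 3 = 0 := by
          have ha := (hdeg u₀ hu₀).2
          have hb := h2 u₀ hu₀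
          omega
        have hu₀1 : 1 ≤ G.degree u₀ := (hdeg u₀ hu₀).1
        have : 0 < (G.neighborFinset u₀).card := by
          rw [SimpleGraph.card_neighborFinset_eq_degree]; omega
        obtain ⟨v, hv⟩ := Finset.card_pos.mp this
        rw [SimpleGraph.mem_neighborFinset] at hv
        have hvL : v ∉ L := fun hvL => hind u₀ hu₀ v hvL hv
        have hdv : 1 ≤ G.degree v := by
          rw [← SimpleGraph.card_neighborFinset_eq_degree]
          refine Finset.card_pos.mpr ⟨u₀, ?_⟩
          rw [SimpleGraph.mem_neighborFinset]
          exact hv.symm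
        have hedge := Gdel_edge G v
        have hm'lt : (Gdel G v).edgeFinset.card < m := by omega
        have hL' : ∀ w ∈ L, ∀ x ∈ L, ¬ (Gdel G v).Adj w x :=
          fun w hw x hx hadj => hind w hw x hx hadj.1
        have hdeg' : ∀ w ∈ L, 1 ≤ (Gdel G v).degree w ∧ (Gdel G v).degree w % 3 ≠ 1 := by
          intro w hw
          have hwv : w ≠ v := fun h => hvL (h ▸ hw)
          have hstep := Gdel_deg G v w hwv
          have hw0 : G.degree w % 3 = 0 := by
            have := (hdeg w hw).2
            have := h2 w hw
            omega
          have hw1 : 1 ≤ G.degree w := (hdeg w hw).1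
          by_cases hvw : G.Adj v w
          · rw [if_pos hvw] at hstep
            constructor <;> omega
          · rw [if_neg hvw, add_zero] at hstep
            constructor <;> omega
        obtain ⟨f₀, hf₀⟩ := IH _ hm'lt (Gdel G v) inferInstance rfl L hL' hdeg'
        obtain ⟨f, hf⟩ := extend G v f₀
        exact ⟨f, by omega⟩


lemma sqrt_step (m' x c : ℕ)
    (hc : ((2*x + c^2 : ℝ))^2 ≤ (c:ℝ)^2 * (8*(m'+x)+1)) :
    Real.sqrt (8*(m'+x)+1) ≤ Real.sqrt (8*m'+1) + 2*c := by
  set σ := Real.sqrt (8*(m'+x)+1) with hσdef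
  set σ' := Real.sqrt (8*m'+1) with hσ'def
  have hσnn : 0 ≤ σ := Real.sqrt_nonneg _
  have hσ'nn : 0 ≤ σ' := Real.sqrt_nonneg _
  have hσsq : σ^2 = 8*(m'+x)+1 := Real.sq_sqrt (by positivity)
  have hσ'sq : σ'^2 = 8*m'+1 := Real.sq_sqrt (by positivity)
  have hcσ : (2*x + c^2 : ℝ) ≤ c * σ := by
    have h1 : ((2*x + c^2 : ℝ))^2 ≤ (c * σ)^2 := by
      rw [mul_pow, hσsq]; exact hc
    have h2 : (0:ℝ) ≤ 2*x + c^2 := by positivity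
    have h3 : (0:ℝ) ≤ c * σ := by positivity
    nlinarith
  rcases le_or_gt σ (2*c) with h | h
  · linarith
  · have h1 : (σ - 2*c)^2 ≤ σ'^2 := by
      rw [hσ'sq]
      have h4 : σ^2 = 8*m' + 8*x + 1 := by rw [hσsq]; push_cast; ring
      nlinarith
    have h2 : σ - 2*c ≤ σ' := by
      have h3 := Real.sqrt_le_sqrt h1
      rwa [Real.sqrt_sq (by linarith), Real.sqrt_sq hσ'nn] at h3
    linarith

/-- the casted sqrt step used in weapons -/
lemma sqrt_step' (m m' x c : ℕ) (hmx : m = m' + x)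
    (hc : (2*x + c^2)^2 ≤ c^2 * (8*m+1)) :
    Real.sqrt (8*m+1) ≤ Real.sqrt (8*m'+1) + 2*c := by
  subst hmx
  have hcR := (Nat.cast_le (α := ℝ)).mpr hc
  push_cast at hcR
  have key : Real.sqrt (8*((m':ℝ)+(x:ℝ))+1) ≤ Real.sqrt (8*(m':ℝ)+1) + 2*(c:ℝ) := by
    apply sqrt_step
    nlinarith [hcR]
  rw [Nat.cast_add]
  exact key




lemma deg_pos_of_adj (G : SimpleGraph V) [DecidableRel G.Adj] {y z : V} (h : G.Adj y z) :
    1 ≤ G.degree y := by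
  rw [← SimpleGraph.card_neighborFinset_eq_degree]
  exact Finset.card_pos.mpr ⟨z, by rwa [SimpleGraph.mem_neighborFinset]⟩

/-- vertex weapon -/
lemma vertexW (m : ℕ)
    (IH : ∀ m' < m, ∀ (G' : SimpleGraph V) (_ : DecidableRel G'.Adj), G'.edgeFinset.card = m' →
      ∃ f : V → Fin 3, (4*m' : ℝ) + (Real.sqrt (8*m'+1) - 1) ≤ 3 * (cutP G' f : ℝ))
    (G : SimpleGraph V) [DecidableRel G.Adj] (hm : G.edgeFinset.card = m)
    (v : V) (hd : 1 ≤ G.degree v)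
    (hcond : (2*G.degree v + (G.degree v % 3)^2)^2 ≤ (G.degree v % 3)^2 * (8*m+1)) :
    ∃ f : V → Fin 3, (4*m : ℝ) + (Real.sqrt (8*m+1) - 1) ≤ 3 * (cutP G f : ℝ) := by
  have hedge := Gdel_edge G v
  have hlt : (Gdel G v).edgeFinset.card < m := by omega
  obtain ⟨f₀, hf₀⟩ := IH _ hlt (Gdel G v) inferInstance rfl
  obtain ⟨f, hf⟩ := extend G v f₀
  refine ⟨f, ?_⟩
  have hs := sqrt_step' m (Gdel G v).edgeFinset.card (G.degree v) (G.degree v % 3)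
    (by omega) hcond
  have hfR := (Nat.cast_le (α := ℝ)).mpr hf
  push_cast at hfR
  have hmR : (m : ℝ) = ((Gdel G v).edgeFinset.card : ℝ) + (G.degree v : ℝ) := by
    exact_mod_cast (by omega : m = (Gdel G v).edgeFinset.card + G.degree v)
  linarith

/-- pair weapon : delete `y`, then `z` (adjacent) -/
lemma pairW (m : ℕ)
    (IH : ∀ m' < m, ∀ (G' : SimpleGraph V) (_ : DecidableRel G'.Adj), G'.edgeFinset.card = m' →
      ∃ f : V → Fin 3, (4*m' : ℝ) + (Real.sqrt (8*m'+1) - 1) ≤ 3 * (cutP G' f : ℝ))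
    (G : SimpleGraph V) [DecidableRel G.Adj] (hm : G.edgeFinset.card = m)
    (y z : V) (hadj : G.Adj y z)
    (hcond : (2*(G.degree y + (Gdel G y).degree z)
        + ((G.degree y % 3) + ((Gdel G y).degree z % 3))^2)^2
      ≤ ((G.degree y % 3) + ((Gdel G y).degree z % 3))^2 * (8*m+1)) :
    ∃ f : V → Fin 3, (4*m : ℝ) + (Real.sqrt (8*m+1) - 1) ≤ 3 * (cutP G f : ℝ) := by
  have hdy : 1 ≤ G.degree y := deg_pos_of_adj G hadj
  have hedge1 := Gdel_edge G y
  have hedge2 := Gdel_edge (Gdel G y) z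
  have hlt : (Gdel (Gdel G y) z).edgeFinset.card < m := by omega
  obtain ⟨f₀, hf₀⟩ := IH _ hlt (Gdel (Gdel G y) z) inferInstance rfl
  obtain ⟨f₁, hf₁⟩ := extend (Gdel G y) z f₀
  obtain ⟨f, hf⟩ := extend G y f₁
  refine ⟨f, ?_⟩
  have hmeq : m = (Gdel (Gdel G y) z).edgeFinset.card
      + (G.degree y + (Gdel G y).degree z) := by omega
  have hs := sqrt_step' m (Gdel (Gdel G y) z).edgeFinset.card
    (G.degree y + (Gdel G y).degree z)
    ((G.degree y % 3) + ((Gdel G y).degree z % 3)) hmeq hcond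
  have hcomb : 3 * cutP (Gdel (Gdel G y) z) f₀
      + 4*(G.degree y + (Gdel G y).degree z)
      + 2*((G.degree y % 3) + ((Gdel G y).degree z % 3)) ≤ 3 * cutP G f := by omega
  have hcombR := (Nat.cast_le (α := ℝ)).mpr hcomb
  push_cast at hcombR
  have hmR : (m : ℝ) = ((Gdel (Gdel G y) z).edgeFinset.card : ℝ)
      + ((G.degree y : ℝ) + ((Gdel G y).degree z : ℝ)) := by exact_mod_cast hmeq
  have hc3 : ((G.degree y % 3 + (Gdel G y).degree z % 3 : ℕ) : ℝ)
      = ((G.degree y % 3 : ℕ) : ℝ) + (((Gdel G y).degree z % 3 : ℕ) : ℝ) := by push_cast; ring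
  linarith


/-- helper: `c·√(8m+1) < t` from `c²(8m+1) < t²` -/
lemma csqrt_lt (m c t : ℕ) (h : c^2*(8*m+1) < t^2) :
    (c:ℝ) * Real.sqrt (8*(m:ℝ)+1) < t := by
  have hσsq : (Real.sqrt (8*(m:ℝ)+1))^2 = 8*(m:ℝ)+1 := Real.sq_sqrt (by positivity)
  have hσnn := Real.sqrt_nonneg (8*(m:ℝ)+1)
  have hR : (c:ℝ)^2*(8*(m:ℝ)+1) < (t:ℝ)^2 := by exact_mod_cast h
  have hcnn : (0:ℝ) ≤ c := Nat.cast_nonneg c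
  have htnn : (0:ℝ) ≤ t := Nat.cast_nonneg t
  nlinarith [mul_nonneg hcnn hσnn]

/-- helper: `√A < b` from `A < b²` -/
lemma sqrt_lt_nat (A b : ℕ) (h : A < b^2) : Real.sqrt A < (b:ℕ) := by
  have h1 : ((A:ℝ)) < ((b:ℝ))^2 := by exact_mod_cast h
  have h2 : (0:ℝ) ≤ b := by positivity
  nlinarith [Real.sq_sqrt (by positivity : (0:ℝ) ≤ (A:ℝ)), Real.sqrt_nonneg (A:ℝ)]

lemma main : ∀ m : ℕ, ∀ (G : SimpleGraph V) (_ : DecidableRel G.Adj),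
    G.edgeFinset.card = m →
    ∃ f : V → Fin 3, (4*m : ℝ) + (Real.sqrt (8*m+1) - 1) ≤ 3 * (cutP G f : ℝ) := by
  intro m
  induction m using Nat.strong_induction_on with
  | _ m IH =>
  intro G instG hm
  rcases Nat.eq_zero_or_pos m with hm0 | hmpos
  · subst hm0
    refine ⟨fun _ => 0, ?_⟩
    have h1 : (8*((0:ℕ):ℝ)+1) = 1 := by norm_num
    rw [h1, Real.sqrt_one]
    norm_num
  by_cases W1 : ∃ v : V, G.degree v % 3 = 1 ∧ (2*G.degree v + 1)^2 ≤ 8*m+1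
  · obtain ⟨v, hv1, hv2⟩ := W1
    refine vertexW m IH G hm v (by omega) ?_
    rw [hv1]
    simpa using hv2
  by_cases W2 : ∃ v : V, G.degree v % 3 = 2 ∧ (G.degree v + 2)^2 ≤ 8*m+1
  · obtain ⟨v, hv1, hv2⟩ := W2
    refine vertexW m IH G hm v (by omega) ?_
    rw [hv1]
    nlinarith [hv2]
  by_cases W3 : ∃ y z : V, G.Adj y z ∧
      (2*(G.degree y + (Gdel G y).degree z)
        + ((G.degree y % 3) + ((Gdel G y).degree z % 3))^2)^2
      ≤ ((G.degree y % 3) + ((Gdel G y).degree z % 3))^2 * (8*m+1)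
  · obtain ⟨y, z, hadj, hc⟩ := W3
    exact pairW m IH G hm y z hadj hc
  -- bad case
  push_neg at W1 W2 W3
  have hsum := SimpleGraph.sum_degrees_eq_twice_card_edges G
  rw [hm] at hsum
  -- every low positive-degree vertex has degree ≡ 0 mod 3
  have hL0 : ∀ v : V, 1 ≤ G.degree v → G.degree v * (G.degree v + 1) ≤ 2*m →
      G.degree v % 3 = 0 := by
    intro v h1 h2
    rcases (by omega : G.degree v % 3 = 0 ∨ G.degree v % 3 = 1 ∨ G.degree v % 3 = 2) with h|h|h
    · exact h
    · exfalso; have h3 := W1 v h; nlinarith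
    · exfalso; have h3 := W2 v h; nlinarith
  -- m ≥ 5
  have hm5 : 5 ≤ m := by
    by_contra hlt
    push_neg at hlt
    have hsmall : ∃ v : V, 1 ≤ G.degree v ∧ G.degree v ≤ 2 := by
      by_contra hno
      push_neg at hno
      have hall : ∀ w : V, 1 ≤ G.degree w → 3 ≤ G.degree w := by
        intro w h1
        have := hno w h1
        omega
      obtain ⟨u, hu⟩ := exists_pos_degree G (by omega)
      have hnotmem : u ∉ G.neighborFinset u := by
        simp [SimpleGraph.mem_neighborFinset]
      have hcard : 4 ≤ (insert u (G.neighborFinset u)).card := by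
        rw [Finset.card_insert_of_notMem hnotmem, SimpleGraph.card_neighborFinset_eq_degree]
        have := hall u hu
        omega
      have hdegS : ∀ w ∈ insert u (G.neighborFinset u), 3 ≤ G.degree w := by
        intro w hw
        rcases Finset.mem_insert.mp hw with rfl | hw
        · exact hall _ hu
        · rw [SimpleGraph.mem_neighborFinset] at hw
          exact hall _ (deg_pos_of_adj G hw.symm)
      have h12 : 3 * (insert u (G.neighborFinset u)).card
          ≤ ∑ w ∈ insert u (G.neighborFinset u), G.degree w := by
        have := Finset.sum_le_sum hdegS
        have hc : ∑ _w ∈ insert u (G.neighborFinset u), 3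
            = 3 * (insert u (G.neighborFinset u)).card := by
          rw [Finset.sum_const]
          ring
        omega
      have h13 : ∑ w ∈ insert u (G.neighborFinset u), G.degree w ≤ ∑ w, G.degree w :=
        Finset.sum_le_sum_of_subset (Finset.subset_univ _)
      omega
    obtain ⟨v, hv1, hv2⟩ := hsmall
    rcases (by omega : G.degree v = 1 ∨ G.degree v = 2) with h|h
    · have hcon := W1 v (by omega)
      rw [h] at hcon
      norm_num at hcon
      omega
    · have hm2 : 2 ≤ m := by
        have hnotmem : v ∉ G.neighborFinset v := by
          simp [SimpleGraph.mem_neighborFinset]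
        have h1 : (G.neighborFinset v).card • 1 ≤ ∑ w ∈ G.neighborFinset v, G.degree w := by
          apply Finset.card_nsmul_le_sum
          intro x hx
          rw [SimpleGraph.mem_neighborFinset] at hx
          exact deg_pos_of_adj G hx.symm
        have h2 : ∑ w ∈ insert v (G.neighborFinset v), G.degree w ≤ ∑ w, G.degree w :=
          Finset.sum_le_sum_of_subset (Finset.subset_univ _)
        rw [Finset.sum_insert hnotmem] at h2
        have h3 : (G.neighborFinset v).card = 2 := by
          rw [SimpleGraph.card_neighborFinset_eq_degree, h]
        rw [h3] at h1
        simp only [smul_eq_mul, mul_one] at h1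
        omega
      have hcon := W2 v (by omega)
      rw [h] at hcon
      norm_num at hcon
      omega
  -- σ facts
  have hσnn : (0:ℝ) ≤ Real.sqrt (8*(m:ℝ)+1) := Real.sqrt_nonneg _
  have hσsq : (Real.sqrt (8*(m:ℝ)+1))^2 = 8*(m:ℝ)+1 := Real.sq_sqrt (by positivity)
  have hσ6 : (6:ℝ) ≤ Real.sqrt (8*(m:ℝ)+1) := by
    have h41 : (36:ℝ) ≤ 8*(m:ℝ)+1 := by
      have h5 : (5:ℝ) ≤ (m:ℝ) := by exact_mod_cast hm5
      linarith
    nlinarith [hσsq, hσnn]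
  -- the low and high vertex sets
  set L : Finset V := Finset.univ.filter
    (fun v => 1 ≤ G.degree v ∧ G.degree v * (G.degree v + 1) ≤ 2*m) with hLdef
  set H : Finset V := Finset.univ.filter
    (fun v => 1 ≤ G.degree v ∧ 2*m < G.degree v * (G.degree v + 1)) with hHdef
  have hmemL : ∀ v, v ∈ L ↔ (1 ≤ G.degree v ∧ G.degree v * (G.degree v + 1) ≤ 2*m) := by
    intro v; rw [hLdef]; simp
  have hmemH : ∀ v, v ∈ H ↔ (1 ≤ G.degree v ∧ 2*m < G.degree v * (G.degree v + 1)) := by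
    intro v; rw [hHdef]; simp
  -- independence of L
  have hLind : ∀ u ∈ L, ∀ w ∈ L, ¬ G.Adj u w := by
    intro u hu w hw hadj
    rw [hmemL] at hu hw
    have hu3 := hL0 u hu.1 hu.2
    have hw3 := hL0 w hw.1 hw.2
    have hdw' : (Gdel G u).degree w + (if G.Adj u w then 1 else 0) = G.degree w :=
      Gdel_deg G u w hadj.ne'
    rw [if_pos hadj] at hdw'
    have hρ : (G.degree u % 3) + ((Gdel G u).degree w % 3) = 2 := by omega
    have hgt := W3 u w hadj
    rw [hρ] at hgt
    nlinarith [hu.2, hw.2, two_mul_le_add_sq (G.degree u) (G.degree w), hgt, hdw']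
  -- hubs have big degree
  have hHσ : ∀ v ∈ H, Real.sqrt (8*(m:ℝ)+1) < 2*(G.degree v:ℝ)+1 := by
    intro v hv
    rw [hmemH] at hv
    have h1 : 1^2*(8*m+1) < (2*G.degree v+1)^2 := by nlinarith [hv.2]
    have h2 := csqrt_lt m 1 (2*G.degree v+1) h1
    push_cast at h2
    linarith
  -- neighbors of L-vertices are hubs
  have hNLH : ∀ u ∈ L, ∀ v, G.Adj u v → v ∈ H := by
    intro u hu v hadj
    have h1 : 1 ≤ G.degree v := deg_pos_of_adj G hadj.symm
    by_cases h2 : G.degree v * (G.degree v + 1) ≤ 2*m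
    · exact absurd hadj (hLind u hu v ((hmemL v).mpr ⟨h1, h2⟩))
    · exact (hmemH v).mpr ⟨h1, by omega⟩
  -- the key edge inequality
  have hEdge : ∀ u ∈ L, ∀ v, G.Adj u v →
      Real.sqrt (8*(m:ℝ)+1) - 1 < (G.degree u : ℝ) + (G.degree v : ℝ) := by
    intro u hu v hadj
    have hvH := hNLH u hu v hadj
    rw [hmemL] at hu
    have hu3 := hL0 u hu.1 hu.2
    have hu1 : 3 ≤ G.degree u := by omega
    have hdv1 : 1 ≤ G.degree v := deg_pos_of_adj G hadj.symm
    rcases (by omega : G.degree v % 3 = 0 ∨ G.degree v % 3 = 1 ∨ G.degree v % 3 = 2) with h|h|h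
    · have hdv' : (Gdel G u).degree v + (if G.Adj u v then 1 else 0) = G.degree v :=
        Gdel_deg G u v hadj.ne'
      rw [if_pos hadj] at hdv'
      have hρ : (G.degree u % 3) + ((Gdel G u).degree v % 3) = 2 := by omega
      have hgt := W3 u v hadj
      rw [hρ] at hgt
      have hgt2 : 2^2*(8*m+1) < (2*G.degree u+2*G.degree v+2)^2 := by
        have ht : 2*(G.degree u + (Gdel G u).degree v) + 2^2
            = 2*G.degree u+2*G.degree v+2 := by omega
        rw [← ht]
        exact hgt
      have h3 := csqrt_lt m 2 (2*G.degree u+2*G.degree v+2) hgt2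
      push_cast at h3
      linarith
    · have hdu' : (Gdel G v).degree u + (if G.Adj v u then 1 else 0) = G.degree u :=
        Gdel_deg G v u hadj.ne
      rw [if_pos hadj.symm] at hdu'
      have hρ : (G.degree v % 3) + ((Gdel G v).degree u % 3) = 3 := by omega
      have hgt := W3 v u hadj.symm
      rw [hρ] at hgt
      have hgt2 : 3^2*(8*m+1) < (2*G.degree u+2*G.degree v+7)^2 := by
        have ht : 2*(G.degree v + (Gdel G v).degree u) + 3^2
            = 2*G.degree u+2*G.degree v+7 := by omega
        rw [← ht]
        exact hgt
      have h3 := csqrt_lt m 3 (2*G.degree u+2*G.degree v+7) hgt2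
      push_cast at h3
      linarith
    · have hdu' : (Gdel G v).degree u + (if G.Adj v u then 1 else 0) = G.degree u :=
        Gdel_deg G v u hadj.ne
      rw [if_pos hadj.symm] at hdu'
      have hρ : (G.degree v % 3) + ((Gdel G v).degree u % 3) = 4 := by omega
      have hgt := W3 v u hadj.symm
      rw [hρ] at hgt
      have hgt2 : 4^2*(8*m+1) < (2*G.degree u+2*G.degree v+14)^2 := by
        have ht : 2*(G.degree v + (Gdel G v).degree u) + 4^2
            = 2*G.degree u+2*G.degree v+14 := by omega
        rw [← ht]
        exact hgt
      have h3 := csqrt_lt m 4 (2*G.degree u+2*G.degree v+14) hgt2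
      push_cast at h3
      linarith
  -- disjointness and handshake
  have hdisj : Disjoint L H := by
    rw [Finset.disjoint_left]
    intro x hx hx'
    rw [hmemL] at hx
    rw [hmemH] at hx'
    omega
  have hLH0 : ∀ v : V, v ∉ L → v ∉ H → G.degree v = 0 := by
    intro v hv hv'
    by_contra h
    rcases le_or_gt (G.degree v * (G.degree v+1)) (2*m) with h2|h2
    · exact hv ((hmemL v).mpr ⟨by omega, h2⟩)
    · exact hv' ((hmemH v).mpr ⟨by omega, h2⟩)
  have hhand : (∑ u ∈ L, G.degree u) + (∑ v ∈ H, G.degree v) = 2*m := by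
    have h0 : ∑ x ∈ L ∪ H, G.degree x = ∑ x, G.degree x :=
      Finset.sum_subset (Finset.subset_univ _) (fun x _ hx => by
        rw [Finset.mem_union] at hx
        push_neg at hx
        exact hLH0 x hx.1 hx.2)
    rw [Finset.sum_union hdisj] at h0
    omega
  -- L is nonempty
  have hLne : L.Nonempty := by
    by_contra hLe
    rw [Finset.not_nonempty_iff_eq_empty] at hLe
    obtain ⟨u, hu⟩ := exists_pos_degree G (by omega)
    have hallH : ∀ w : V, 1 ≤ G.degree w → w ∈ H := by
      intro w h1
      by_cases h2 : G.degree w * (G.degree w+1) ≤ 2*m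
      · exfalso
        have hmem : w ∈ L := (hmemL w).mpr ⟨h1, h2⟩
        rw [hLe] at hmem
        exact absurd hmem (Finset.notMem_empty w)
      · exact (hmemH w).mpr ⟨h1, by omega⟩
    have hnotmem : u ∉ G.neighborFinset u := by simp [SimpleGraph.mem_neighborFinset]
    have hSnn : (insert u (G.neighborFinset u)).Nonempty := ⟨u, Finset.mem_insert_self u _⟩
    have h1 : ∀ w ∈ insert u (G.neighborFinset u),
        (Real.sqrt (8*(m:ℝ)+1) - 1)/2 < (G.degree w : ℝ) := by
      intro w hw
      have hw1 : 1 ≤ G.degree w := by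
        rcases Finset.mem_insert.mp hw with rfl | hw2
        · exact hu
        · rw [SimpleGraph.mem_neighborFinset] at hw2
          exact deg_pos_of_adj G hw2.symm
      have := hHσ w (hallH w hw1)
      linarith
    have h2 := Finset.sum_lt_sum_of_nonempty hSnn h1
    rw [Finset.sum_const, nsmul_eq_mul] at h2
    have h3 : ∑ w ∈ insert u (G.neighborFinset u), (G.degree w:ℝ) ≤ ∑ w, (G.degree w:ℝ) :=
      Finset.sum_le_sum_of_subset_of_nonneg (Finset.subset_univ _)
        (fun x _ _ => by positivity)
    have h4 : ∑ w, (G.degree w:ℝ) = 2*(m:ℝ) := by exact_mod_cast hsum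
    have h5 : ((insert u (G.neighborFinset u)).card : ℝ) = (G.degree u : ℝ) + 1 := by
      rw [Finset.card_insert_of_notMem hnotmem, SimpleGraph.card_neighborFinset_eq_degree]
      push_cast
      ring
    have h6 := hHσ u (hallH u hu)
    rw [h5] at h2
    nlinarith [h2, h3, h4, h6, hσsq, hσnn]
  -- pick u₀ ∈ L and its hub neighbor v₀
  have hLne2 := hLne
  obtain ⟨u₀, hu₀⟩ := hLne2
  have hu₀deg : 1 ≤ G.degree u₀ := ((hmemL u₀).mp hu₀).1
  have hnbr : (G.neighborFinset u₀).Nonempty := by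
    rw [← Finset.card_pos, SimpleGraph.card_neighborFinset_eq_degree]
    omega
  obtain ⟨v₀, hv₀⟩ := hnbr
  rw [SimpleGraph.mem_neighborFinset] at hv₀
  have hv₀H : v₀ ∈ H := hNLH u₀ hu₀ v₀ hv₀
  have hHne : H.Nonempty := ⟨v₀, hv₀H⟩
  -- support bound
  have hsupport : ∀ v ∈ H, G.degree v + 1 ≤ L.card + H.card := by
    intro v hv
    have hsub : insert v (G.neighborFinset v) ⊆ L ∪ H := by
      intro w hw
      have hw1 : 1 ≤ G.degree w := by
        rcases Finset.mem_insert.mp hw with h | hw2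
        · rw [h]
          exact ((hmemH v).mp hv).1
        · rw [SimpleGraph.mem_neighborFinset] at hw2
          exact deg_pos_of_adj G hw2.symm
      rcases le_or_gt (G.degree w * (G.degree w+1)) (2*m) with h2|h2
      · exact Finset.mem_union_left _ ((hmemL w).mpr ⟨hw1, h2⟩)
      · exact Finset.mem_union_right _ ((hmemH w).mpr ⟨hw1, h2⟩)
    have hcard := Finset.card_le_card hsub
    rw [Finset.card_insert_of_notMem (by simp [SimpleGraph.mem_neighborFinset]),
      SimpleGraph.card_neighborFinset_eq_degree] at hcard
    have := Finset.card_union_le L H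
    omega
  -- hub degree sum
  have hHsum : (H.card : ℝ) * ((Real.sqrt (8*(m:ℝ)+1) - 1)/2)
      < ∑ v ∈ H, (G.degree v : ℝ) := by
    have h1 : ∀ v ∈ H, (Real.sqrt (8*(m:ℝ)+1) - 1)/2 < (G.degree v : ℝ) := by
      intro v hv
      have := hHσ v hv
      linarith
    have h2 := Finset.sum_lt_sum_of_nonempty hHne h1
    rwa [Finset.sum_const, nsmul_eq_mul] at h2
  -- per-u lower bound
  have hperu : ∀ u ∈ L,
      Real.sqrt (8*(m:ℝ)+1) - (L.card:ℝ) - (H.card:ℝ) < (G.degree u : ℝ) := by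
    intro u hu
    have hud : 1 ≤ G.degree u := ((hmemL u).mp hu).1
    have hnbru : (G.neighborFinset u).Nonempty := by
      rw [← Finset.card_pos, SimpleGraph.card_neighborFinset_eq_degree]
      omega
    obtain ⟨v, hv⟩ := hnbru
    rw [SimpleGraph.mem_neighborFinset] at hv
    have hvH := hNLH u hu v hv
    have h1 := hEdge u hu v hv
    have h2 := hsupport v hvH
    have h2R : (G.degree v : ℝ) + 1 ≤ (L.card : ℝ) + (H.card : ℝ) := by exact_mod_cast h2
    linarith
  have hasum : (L.card : ℝ) * (Real.sqrt (8*(m:ℝ)+1) - (L.card:ℝ) - (H.card:ℝ))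
      < ∑ u ∈ L, (G.degree u : ℝ) := by
    have h2 := Finset.sum_lt_sum_of_nonempty hLne hperu
    rwa [Finset.sum_const, nsmul_eq_mul] at h2
  have hhandR : (∑ u ∈ L, (G.degree u:ℝ)) + (∑ v ∈ H, (G.degree v:ℝ)) = 2*(m:ℝ) := by
    exact_mod_cast hhand
  -- the punchline : 2ℓ > σ − 1
  have hσbig : Real.sqrt (8*(m:ℝ)+1) - 1 < 2*(L.card:ℝ) := by
    by_contra hneg
    push_neg at hneg
    set σ := Real.sqrt (8*(m:ℝ)+1) with hσd
    set A := ∑ u ∈ L, (G.degree u:ℝ) with hAd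
    set B := ∑ v ∈ H, (G.degree v:ℝ) with hBd
    set lr := (L.card : ℝ) with hlrd
    set kr := (H.card : ℝ) with hkrd
    have hlr1 : (1:ℝ) ≤ lr := by
      have h := Finset.card_pos.mpr hLne
      rw [hlrd]
      exact_mod_cast h
    have hkr0 : (0:ℝ) ≤ kr := by rw [hkrd]; exact Nat.cast_nonneg _
    have hsupR : (σ+1)/2 < lr + kr := by
      have h2 := hsupport v₀ hv₀H
      have h2R : (G.degree v₀ : ℝ) + 1 ≤ lr + kr := by
        rw [hlrd, hkrd]
        exact_mod_cast h2
      have h3 := hHσ v₀ hv₀H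
      linarith
    have p1 : (0:ℝ) < σ - 1 := by linarith
    have e1 : kr*(σ-1) < (σ^2-1)/2 - 2*A := by nlinarith [hHsum, hhandR, hσsq]
    have e2' := mul_lt_mul_of_pos_right hsupR p1
    have e2 : 2*A < lr*(σ-1) := by nlinarith [e2', e1]
    have e3' := mul_lt_mul_of_pos_right hasum p1
    have e4' := mul_lt_mul_of_pos_left e1 (show (0:ℝ) < lr by linarith)
    have hX : (0:ℝ) ≤ σ - 1 - 2*lr := by linarith
    have e5 : A*(σ-1-2*lr) ≤ (lr*(σ-1)/2)*(σ-1-2*lr) :=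
      mul_le_mul_of_nonneg_right (by linarith) hX
    nlinarith [e3', e4', e5]
  -- conclude via the sweep lemma
  obtain ⟨f, hf⟩ := sweep m G instG hm L hLind (fun u hu => by
    have h1 := ((hmemL u).mp hu).1
    have h3 := hL0 u h1 ((hmemL u).mp hu).2
    exact ⟨h1, by omega⟩)
  refine ⟨f, ?_⟩
  have hfR := (Nat.cast_le (α := ℝ)).mpr hf
  push_cast at hfR
  have hl0 : (0:ℝ) ≤ (L.card : ℝ) := by positivity
  linarith [hσbig]

/-- the partition associated with a colouring -/
def colP (f : V → Fin 3) : Fin 3 → Finset V := fun i => Finset.univ.filter (fun v => f v = i)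

lemma colP_isPartition (f : V → Fin 3) : IsKPartition (V := V) (colP f) := by
  constructor
  · intro i j hij
    rw [Finset.disjoint_left]
    intro v hv hv'
    simp only [colP, Finset.mem_filter, Finset.mem_univ, true_and] at hv hv'
    exact hij (hv ▸ hv')
  · intro v
    exact ⟨f v, by simp [colP]⟩

lemma crossTotal_colP (G : SimpleGraph V) [DecidableRel G.Adj] (f : V → Fin 3) :
    2 * crossTotal G (colP f) = cutP G f := by
  classical
  have hA : ∀ i j : Fin 3, eCross G (colP f i) (colP f j)
      = (Finset.univ.filter (fun p : V × V =>
          G.Adj p.1 p.2 ∧ f p.1 = i ∧ f p.2 = j)).card := by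
    intro i j
    unfold eCross colP
    congr 1
    ext p
    simp [Finset.mem_filter]
  -- `<`-count equals crossTotal
  have hB : crossTotal G (colP f)
      = (Finset.univ.filter (fun p : V × V => G.Adj p.1 p.2 ∧ f p.1 < f p.2)).card := by
    rw [Finset.card_eq_sum_card_fiberwise
      (f := fun p : V × V => (f p.1, f p.2)) (t := Finset.univ) (fun x _ => Finset.mem_univ _)]
    rw [Fintype.sum_prod_type]
    unfold crossTotal
    refine Finset.sum_congr rfl fun i _ => Finset.sum_congr rfl fun j _ => ?_
    by_cases hij : i < j
    · rw [if_pos hij, hA i j]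
      congr 1
      ext p
      simp only [Finset.mem_filter, Finset.mem_univ, true_and, Prod.mk.injEq, and_assoc]
      constructor
      · rintro ⟨ha, h1, h2⟩
        refine ⟨ha, ?_, h1, h2⟩
        rw [h1, h2]
        exact hij
      · rintro ⟨ha, -, h1, h2⟩
        exact ⟨ha, h1, h2⟩
    · rw [if_neg hij]
      symm
      rw [Finset.card_eq_zero]
      rw [Finset.eq_empty_iff_forall_notMem]
      intro p hp
      simp only [Finset.mem_filter, Finset.mem_univ, true_and, Prod.mk.injEq, and_assoc] at hp
      apply hij
      rw [← hp.2.2.1, ← hp.2.2.2]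
      exact hp.2.1
  -- `<`-count equals `>`-count
  have hC : (Finset.univ.filter (fun p : V × V => G.Adj p.1 p.2 ∧ f p.1 < f p.2)).card
      = (Finset.univ.filter (fun p : V × V => G.Adj p.1 p.2 ∧ f p.2 < f p.1)).card := by
    apply Finset.card_bij (fun p _ => (p.2, p.1))
    · rintro ⟨a, b⟩ hp
      simp only [Finset.mem_filter, Finset.mem_univ, true_and] at hp ⊢
      exact ⟨hp.1.symm, hp.2⟩
    · rintro ⟨a, b⟩ - ⟨c, d⟩ - h
      simp only [Prod.mk.injEq] at h
      simp [h.1, h.2]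
    · rintro ⟨a, b⟩ hp
      refine ⟨(b, a), ?_, rfl⟩
      simp only [Finset.mem_filter, Finset.mem_univ, true_and] at hp ⊢
      exact ⟨hp.1.symm, hp.2⟩
  -- cutP splits
  have hD : cutP G f
      = (Finset.univ.filter (fun p : V × V => G.Adj p.1 p.2 ∧ f p.1 < f p.2)).card
      + (Finset.univ.filter (fun p : V × V => G.Adj p.1 p.2 ∧ f p.2 < f p.1)).card := by
    unfold cutP
    rw [← Finset.card_union_of_disjoint]
    · congr 1
      ext p
      simp only [Finset.mem_union, Finset.mem_filter, Finset.mem_univ, true_and]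
      constructor
      · rintro ⟨ha, hne⟩
        rcases lt_or_gt_of_ne hne with h | h
        · exact Or.inl ⟨ha, h⟩
        · exact Or.inr ⟨ha, h⟩
      · rintro (⟨ha, h⟩ | ⟨ha, h⟩)
        · exact ⟨ha, ne_of_lt h⟩
        · exact ⟨ha, (ne_of_lt h).symm⟩
    · rw [Finset.disjoint_left]
      rintro p hp hp'
      simp only [Finset.mem_filter, Finset.mem_univ, true_and] at hp hp'
      exact absurd (hp.2.trans hp'.2) (lt_irrefl _)
  omega

lemma crossTotal_le (G : SimpleGraph V) [DecidableRel G.Adj] (P : Fin 3 → Finset V) :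
    crossTotal G P ≤ 9 * Fintype.card (V × V) := by
  unfold crossTotal
  have h1 : ∀ i j : Fin 3, (if i < j then eCross G (P i) (P j) else 0)
      ≤ Fintype.card (V × V) := by
    intro i j
    split
    · unfold eCross
      calc (Finset.univ.filter _).card ≤ Finset.univ.card := Finset.card_filter_le _ _
        _ = Fintype.card (V × V) := Finset.card_univ
    · exact Nat.zero_le _
  calc ∑ i : Fin 3, ∑ j : Fin 3, (if i < j then eCross G (P i) (P j) else 0)
      ≤ ∑ _i : Fin 3, ∑ _j : Fin 3, Fintype.card (V × V) := by
        refine Finset.sum_le_sum fun i _ => Finset.sum_le_sum fun j _ => h1 i j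
    _ = 9 * Fintype.card (V × V) := by
        simp [Finset.sum_const, Finset.card_univ]
        ring

end BS

/-- Every graph with `m` edges has a 3-partition with at least `(2/3)m + (1/3)h(m)`
crossing edges, i.e. `f₃(G) ≥ (2/3)m + (1/3)h(m)`. -/
theorem stmt_0 {V : Type*} [Fintype V] [DecidableEq V]
    (G : SimpleGraph V) [DecidableRel G.Adj] (m : ℕ) (hm : m = G.edgeFinset.card) :
    (2 / 3 : ℝ) * m + (1 / 3) * hfun m ≤ (maxCut G 3 : ℝ) := by
  obtain ⟨f, hf⟩ := BS.main m G inferInstance hm.symm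
  have hpart := BS.colP_isPartition (V := V) f
  have hcross := BS.crossTotal_colP G f
  have hmem : crossTotal G (BS.colP f) ∈
      {n : ℕ | ∃ P : Fin 3 → Finset V, IsKPartition P ∧ crossTotal G P = n} :=
    ⟨BS.colP f, hpart, rfl⟩
  have hbdd : BddAbove {n : ℕ | ∃ P : Fin 3 → Finset V, IsKPartition P ∧ crossTotal G P = n} := by
    refine ⟨9 * Fintype.card (V × V), ?_⟩
    rintro n ⟨P, -, rfl⟩
    exact BS.crossTotal_le G P
  have hle : crossTotal G (BS.colP f) ≤ maxCut G 3 := le_csSup hbdd hmem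
  have hfun_eq : hfun m = (Real.sqrt (8*(m:ℝ)+1) - 1)/2 := by
    unfold hfun
    have h : 2*(m:ℝ)+1/4 = (Real.sqrt (8*(m:ℝ)+1)/2)^2 := by
      rw [div_pow, Real.sq_sqrt (by positivity)]
      ring
    rw [h, Real.sqrt_sq (by positivity)]
    ring
  have h2 : (2*(crossTotal G (BS.colP f) : ℝ)) = (BS.cutP G f : ℝ) := by exact_mod_cast hcross
  have hleR : (crossTotal G (BS.colP f) : ℝ) ≤ (maxCut G 3 : ℝ) := by exact_mod_cast hle
  rw [hfun_eq]
  linarith [hf]
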